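/- arXiv:1411.5236 — 4 statements merged into one kernel-verified Lean document; each statement's English description precedes it below -/
import Mathlib

section
/- Let X and Y be irreducible 1-step shifts of finite type over finite alphabets, Z a shift space, and φ : X → Y, ψ : Y → Z 1-block factor codes, with π = ψ ∘ φ. Then for every x ∈ X, the φ/ψ-transition class of x equals the π-transition class of x: [x]_{φ/ψ} = [x]_π. -/
/- Common definitions: shift spaces over finite alphabets, 1-block factor codes,
   transition classes, class degrees, relative transition classes, relative class
   degrees, routability and depth. -/

open Set

namespace SymbDyn

variable {A B C D : Type*}

/-- The shift map `σ` on bi-infinite sequences. -/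
def shift (α : Type*) : (ℤ → α) → (ℤ → α) := fun x i => x (i + 1)

/-- The map on points induced letterwise by a symbol map (a 1-block code). -/
def sliding (Φ : A → B) : (ℤ → A) → (ℤ → B) := fun x i => Φ (x i)

/-- The block `w` occurs in the point `x` starting at coordinate `n`. -/
def OccursAt (x : ℤ → A) (w : List A) (n : ℤ) : Prop :=
  ∀ i : ℕ, i < w.length → w[i]? = some (x (n + i))

/-- The block `w` occurs somewhere in the point `x`. -/
def OccursInPoint (x : ℤ → A) (w : List A) : Prop := ∃ n : ℤ, OccursAt x w n

/-- The block `w` occurs in (a point of) the subset `X`. -/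
def BlockOccursIn (X : Set (ℤ → A)) (w : List A) : Prop := ∃ x ∈ X, OccursInPoint x w

/-- `X` is a shift space: nonempty, closed (product of discrete topologies) and
shift-invariant. -/
def IsShiftSpace [TopologicalSpace A] (X : Set (ℤ → A)) : Prop :=
  X.Nonempty ∧ IsClosed X ∧ shift A '' X = X

/-- `X` is irreducible: any two blocks of `X` can be connected inside `X`. -/
def IsIrreducibleShift (X : Set (ℤ → A)) : Prop :=
  ∀ u v : List A, BlockOccursIn X u → BlockOccursIn X v →
    ∃ t : List A, BlockOccursIn X (u ++ t ++ v)

/-- `X` is a 1-step shift of finite type: any point all of whose 2-blocks occur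
in `X` lies in `X`. -/
def IsOneStepSFT (X : Set (ℤ → A)) : Prop :=
  ∀ z : ℤ → A, (∀ i : ℤ, BlockOccursIn X [z i, z (i + 1)]) → z ∈ X

/-- `x` is right transitive in `X`: every block of `X` occurs in `x|_[0,∞)`. -/
def RightTransitive (X : Set (ℤ → A)) (x : ℤ → A) : Prop :=
  ∀ w : List A, BlockOccursIn X w → ∃ n : ℤ, 0 ≤ n ∧ OccursAt x w n

/-- `x` is left transitive in `X`: every block of `X` occurs in `x|_(-∞,0]`. -/
def LeftTransitive (X : Set (ℤ → A)) (x : ℤ → A) : Prop :=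
  ∀ w : List A, BlockOccursIn X w → ∃ n : ℤ, n + w.length ≤ 1 ∧ OccursAt x w n

/-- `x` is bi-transitive in `X`. -/
def BiTransitive (X : Set (ℤ → A)) (x : ℤ → A) : Prop :=
  RightTransitive X x ∧ LeftTransitive X x

/-- `x` is recurrent: every block of `x` occurs infinitely often to the right. -/
def Recurrent (x : ℤ → A) : Prop :=
  ∀ w : List A, OccursInPoint x w → ∀ n : ℤ, ∃ m : ℤ, n ≤ m ∧ OccursAt x w m

/-- `xb` is a `(π,m)`-bridge from `x` to `x'` (all living in `X`). -/
def IsBridge (X : Set (ℤ → A)) (π : (ℤ → A) → ℤ → C) (m : ℤ) (x x' xb : ℤ → A) : Prop :=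
  xb ∈ X ∧ (∀ i : ℤ, i ≤ m → xb i = x i) ∧
    (∃ n : ℤ, m < n ∧ ∀ i : ℤ, n ≤ i → xb i = x' i) ∧ π xb = π x

/-- `x →_π x'`: `π x = π x'` and there is a `(π,m)`-bridge from `x` to `x'`
for every `m`. -/
def TransTo (X : Set (ℤ → A)) (π : (ℤ → A) → ℤ → C) (x x' : ℤ → A) : Prop :=
  π x = π x' ∧ ∀ m : ℤ, ∃ xb, IsBridge X π m x x' xb

/-- `x ∼_π x'`. -/
def TransEquiv (X : Set (ℤ → A)) (π : (ℤ → A) → ℤ → C) (x x' : ℤ → A) : Prop :=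
  TransTo X π x x' ∧ TransTo X π x' x

/-- The `π`-transition class `[x]_π` of `x` inside `X`. -/
def transClass (X : Set (ℤ → A)) (π : (ℤ → A) → ℤ → C) (x : ℤ → A) : Set (ℤ → A) :=
  {x' | x' ∈ X ∧ TransEquiv X π x x'}

/-- The number `d_π(z)` of `π`-transition classes over the point `z`. -/
noncomputable def ptDeg (X : Set (ℤ → A)) (π : (ℤ → A) → ℤ → C) (z : ℤ → C) : ℕ∞ :=
  {S : Set (ℤ → A) | ∃ x ∈ X, π x = z ∧ S = transClass X π x}.encard

/-- The class degree `d_π = min_{z ∈ Z} d_π(z)`. -/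
noncomputable def classDeg (X : Set (ℤ → A)) (Z : Set (ℤ → C)) (π : (ℤ → A) → ℤ → C) : ℕ∞ :=
  ⨅ z ∈ Z, ptDeg X π z

/-- `xb` is a `(φ/ψ,m)`-bridge from `x` to `x'` relative to `ψ` (whose transition
relation lives on `Y`). -/
def IsRelBridge (X : Set (ℤ → A)) (Y : Set (ℤ → B)) (φ : (ℤ → A) → ℤ → B)
    (ψ : (ℤ → B) → ℤ → C) (m : ℤ) (x x' xb : ℤ → A) : Prop :=
  xb ∈ X ∧ (∀ i : ℤ, i ≤ m → xb i = x i) ∧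
    (∃ n : ℤ, m < n ∧ ∀ i : ℤ, n ≤ i → xb i = x' i) ∧ TransEquiv Y ψ (φ xb) (φ x)

/-- `x →_{φ/ψ} x'`. -/
def RelTransTo (X : Set (ℤ → A)) (Y : Set (ℤ → B)) (φ : (ℤ → A) → ℤ → B)
    (ψ : (ℤ → B) → ℤ → C) (x x' : ℤ → A) : Prop :=
  TransEquiv Y ψ (φ x) (φ x') ∧ ∀ m : ℤ, ∃ xb, IsRelBridge X Y φ ψ m x x' xb

/-- `x ∼_{φ/ψ} x'`. -/
def RelTransEquiv (X : Set (ℤ → A)) (Y : Set (ℤ → B)) (φ : (ℤ → A) → ℤ → B)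
    (ψ : (ℤ → B) → ℤ → C) (x x' : ℤ → A) : Prop :=
  RelTransTo X Y φ ψ x x' ∧ RelTransTo X Y φ ψ x' x

/-- The `φ/ψ`-transition class `[x]_{φ/ψ}` of `x`. -/
def relClass (X : Set (ℤ → A)) (Y : Set (ℤ → B)) (φ : (ℤ → A) → ℤ → B)
    (ψ : (ℤ → B) → ℤ → C) (x : ℤ → A) : Set (ℤ → A) :=
  {x' | x' ∈ X ∧ RelTransEquiv X Y φ ψ x x'}

/-- The number `d_{φ/ψ}(y)` of `φ/ψ`-transition classes over `y`. -/
noncomputable def relPtDeg (X : Set (ℤ → A)) (Y : Set (ℤ → B)) (φ : (ℤ → A) → ℤ → B)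
    (ψ : (ℤ → B) → ℤ → C) (y : ℤ → B) : ℕ∞ :=
  {S : Set (ℤ → A) | ∃ x ∈ X, φ x = y ∧ S = relClass X Y φ ψ x}.encard

/-- The class degree `d_{φ/ψ} = min_{y ∈ Y} d_{φ/ψ}(y)` of `φ` relative to `ψ`. -/
noncomputable def relClassDeg (X : Set (ℤ → A)) (Y : Set (ℤ → B)) (φ : (ℤ → A) → ℤ → B)
    (ψ : (ℤ → B) → ℤ → C) : ℕ∞ :=
  ⨅ y ∈ Y, relPtDeg X Y φ ψ y

/-- The block `x|_{[s, s+l-1]}`. -/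
def segment (x : ℤ → A) (s : ℤ) (l : ℕ) : List A := (List.range l).map fun i => x (s + i)

/-- The block `u` (of the same length as `w`) is routable through the symbol `a`
at coordinate `n` (coordinates start at 1) with respect to the 1-block code
induced by `Θ`, over the target block `w`. -/
def RoutableThru (X : Set (ℤ → A)) (Θ : A → C) (w : List C) (n : ℕ) (a : A)
    (u : List A) : Prop :=
  ∃ v : List A, BlockOccursIn X v ∧ v.length = u.length ∧ v.map Θ = w ∧
    v[0]? = u[0]? ∧ v[v.length - 1]? = u[u.length - 1]? ∧
    v[n - 1]? = some a

/-- `u` is `φ/ψ`-routable through `a` at `n` over the block `w` of `Y`. -/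
def RelRoutable (X : Set (ℤ → A)) (Φ : A → B) (Ψ : B → C) (w : List B) (n : ℕ) (a : A)
    (u : List A) : Prop :=
  RoutableThru X (Ψ ∘ Φ) (w.map Ψ) n a u

/-- The block `w` of `Y` is `φ/ψ`-presented through `M` at `n`. -/
def RelPresented (X : Set (ℤ → A)) (Φ : A → B) (Ψ : B → C) (w : List B) (n : ℕ)
    (M : Set A) : Prop :=
  ∀ u : List A, BlockOccursIn X u → u.map Φ = w → ∃ a ∈ M, RelRoutable X Φ Ψ w n a u

/-- The `φ/ψ`-depth `d_{φ/ψ}(w)` of a block `w`. -/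
noncomputable def relDepth (X : Set (ℤ → A)) (Φ : A → B) (Ψ : B → C) (w : List B) : ℕ∞ :=
  sInf {k : ℕ∞ | ∃ n : ℕ, 1 ≤ n ∧ n ≤ w.length ∧
    ∃ M : Finset A, RelPresented X Φ Ψ w n ↑M ∧ k = (M.card : ℕ∞)}

end SymbDyn

namespace SymbDyn

/-- Any 2-block of a point of `Y` occurs in `Y`. -/
lemma two_block_mem {B : Type*} {Y : Set (ℤ → B)} {p : ℤ → B} (hp : p ∈ Y) (i : ℤ) :
    BlockOccursIn Y [p i, p (i + 1)] := by
  refine ⟨p, hp, i, ?_⟩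
  intro k hk
  have hk2 : k < 2 := by simpa using hk
  rcases (by omega : k = 0 ∨ k = 1) with rfl | rfl <;> simp

/-- `→_ψ` is transitive over a 1-step SFT, by gluing bridges. -/
lemma transTo_trans {B C : Type*} {Y : Set (ℤ → B)} (hYsft : IsOneStepSFT Y)
    {Ψ : B → C} {y1 y2 y3 : ℤ → B}
    (h12 : TransTo Y (sliding Ψ) y1 y2) (h23 : TransTo Y (sliding Ψ) y2 y3) :
    TransTo Y (sliding Ψ) y1 y3 := by
  obtain ⟨he12, hb12⟩ := h12
  obtain ⟨he23, hb23⟩ := h23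
  refine ⟨he12.trans he23, fun m => ?_⟩
  obtain ⟨b1, hb1Y, hb1l, ⟨n1, hn1, hb1r⟩, hb1ψ⟩ := hb12 m
  obtain ⟨b2, hb2Y, hb2l, ⟨n2, hn2, hb2r⟩, hb2ψ⟩ := hb23 n1
  refine ⟨fun i => if i ≤ n1 then b1 i else b2 i, ?_, ?_, ⟨n2, lt_trans hn1 hn2, ?_⟩, ?_⟩
  · apply hYsft
    intro i
    rcases lt_trichotomy i n1 with h | h | h
    · have h1 : i ≤ n1 := le_of_lt h
      have h2 : i + 1 ≤ n1 := h
      simpa [h1, h2] using two_block_mem hb1Y i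
    · subst h
      have hb : b1 i = b2 i := by rw [hb1r i le_rfl, hb2l i le_rfl]
      have h2 : ¬ (i + 1 ≤ i) := by omega
      simpa [h2, hb] using two_block_mem hb2Y i
    · have h1 : ¬ i ≤ n1 := not_le.mpr h
      have h2 : ¬ i + 1 ≤ n1 := by omega
      simpa [h1, h2] using two_block_mem hb2Y i
  · intro i hi
    have h1 : i ≤ n1 := by omega
    simp [h1, hb1l i hi]
  · intro i hi
    have h1 : ¬ i ≤ n1 := by omega
    simp [h1, hb2r i hi]
  · funext i
    by_cases h : i ≤ n1
    · simpa [sliding, h] using congrFun hb1ψ i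
    · have e1 : Ψ (b2 i) = Ψ (y2 i) := congrFun hb2ψ i
      have e2 : Ψ (y1 i) = Ψ (y2 i) := congrFun he12 i
      simp only [sliding, h, if_neg, not_false_iff]
      rw [e1, ← e2]

/-- Right-asymptotic points of `Y` with the same image are transition equivalent. -/
lemma transEquiv_of_rightAsymp {B C : Type*} {Y : Set (ℤ → B)} {Ψ : B → C}
    {p q : ℤ → B} (hp : p ∈ Y) (hq : q ∈ Y)
    (hψeq : sliding Ψ p = sliding Ψ q) {n : ℤ} (hpq : ∀ i : ℤ, n ≤ i → p i = q i) :
    TransEquiv Y (sliding Ψ) p q := by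
  have hn : ∀ m : ℤ, m < max n (m + 1) := fun m => lt_of_lt_of_le (lt_add_one m) (le_max_right _ _)
  constructor
  · exact ⟨hψeq, fun m => ⟨p, hp, fun i _ => rfl,
      ⟨max n (m + 1), hn m, fun i hi => hpq i (le_trans (le_max_left _ _) hi)⟩, rfl⟩⟩
  · exact ⟨hψeq.symm, fun m => ⟨q, hq, fun i _ => rfl,
      ⟨max n (m + 1), hn m, fun i hi => (hpq i (le_trans (le_max_left _ _) hi)).symm⟩, rfl⟩⟩

theorem relClass_eq_transClass
    {A B C : Type*} [Fintype A] [Fintype B] [Fintype C]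
    [TopologicalSpace A] [DiscreteTopology A]
    [TopologicalSpace B] [DiscreteTopology B]
    [TopologicalSpace C] [DiscreteTopology C]
    (X : Set (ℤ → A)) (Y : Set (ℤ → B)) (Z : Set (ℤ → C))
    (hX : IsShiftSpace X) (hXirr : IsIrreducibleShift X) (hXsft : IsOneStepSFT X)
    (hY : IsShiftSpace Y) (hYirr : IsIrreducibleShift Y) (hYsft : IsOneStepSFT Y)
    (hZ : IsShiftSpace Z)
    (Φ : A → B) (Ψ : B → C)
    (hφ : sliding Φ '' X = Y) (hψ : sliding Ψ '' Y = Z)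
    (x : ℤ → A) (hx : x ∈ X) :
    relClass X Y (sliding Φ) (sliding Ψ) x = transClass X (sliding (Ψ ∘ Φ)) x := by
  have key : ∀ w : ℤ → A, sliding Ψ (sliding Φ w) = sliding (Ψ ∘ Φ) w := fun _ => rfl
  have hφmem : ∀ w ∈ X, sliding Φ w ∈ Y := fun w hw => hφ ▸ ⟨w, hw, rfl⟩
  ext x'
  constructor
  · -- relative class ⊆ transition class
    rintro ⟨hx'X, ⟨⟨hE, hBr⟩, ⟨hE', hBr'⟩⟩⟩
    have hπeq : sliding (Ψ ∘ Φ) x = sliding (Ψ ∘ Φ) x' := by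
      rw [← key, ← key]; exact hE.1.1
    refine ⟨hx'X, ⟨hπeq, fun m => ?_⟩, ⟨hπeq.symm, fun m => ?_⟩⟩
    · obtain ⟨xb, hbX, hbl, hbr, hbT⟩ := hBr m
      refine ⟨xb, hbX, hbl, hbr, ?_⟩
      rw [← key, ← key]; exact hbT.1.1
    · obtain ⟨xb, hbX, hbl, hbr, hbT⟩ := hBr' m
      refine ⟨xb, hbX, hbl, hbr, ?_⟩
      rw [← key, ← key]; exact hbT.1.1
  · -- transition class ⊆ relative class
    rintro ⟨hx'X, ⟨⟨hE, hBr⟩, ⟨hE', hBr'⟩⟩⟩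
    have hψeq : sliding Ψ (sliding Φ x) = sliding Ψ (sliding Φ x') := by
      rw [key, key]; exact hE
    -- π-bridges push forward through φ to ψ-bridges
    have hA : TransTo Y (sliding Ψ) (sliding Φ x) (sliding Φ x') := by
      refine ⟨hψeq, fun m => ?_⟩
      obtain ⟨xb, hbX, hbl, ⟨n, hn, hbr⟩, hbπ⟩ := hBr m
      refine ⟨sliding Φ xb, hφmem xb hbX, fun i hi => congrArg Φ (hbl i hi),
        ⟨n, hn, fun i hi => congrArg Φ (hbr i hi)⟩, by rw [key, key]; exact hbπ⟩
    have hA' : TransTo Y (sliding Ψ) (sliding Φ x') (sliding Φ x) := by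
      refine ⟨hψeq.symm, fun m => ?_⟩
      obtain ⟨xb, hbX, hbl, ⟨n, hn, hbr⟩, hbπ⟩ := hBr' m
      refine ⟨sliding Φ xb, hφmem xb hbX, fun i hi => congrArg Φ (hbl i hi),
        ⟨n, hn, fun i hi => congrArg Φ (hbr i hi)⟩, by rw [key, key]; exact hbπ⟩
    refine ⟨hx'X, ⟨⟨hA, hA'⟩, fun m => ?_⟩, ⟨⟨hA', hA⟩, fun m => ?_⟩⟩
    · -- relative bridge from x to x'
      obtain ⟨xb, hbX, hbl, ⟨n, hn, hbr⟩, hbπ⟩ := hBr m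
      have hbψ : sliding Ψ (sliding Φ xb) = sliding Ψ (sliding Φ x') := by
        rw [key, key, hbπ]; exact hE
      have h1 : TransEquiv Y (sliding Ψ) (sliding Φ xb) (sliding Φ x') :=
        transEquiv_of_rightAsymp (hφmem xb hbX) (hφmem x' hx'X) hbψ
          (fun i hi => congrArg Φ (hbr i hi))
      exact ⟨xb, hbX, hbl, ⟨n, hn, hbr⟩,
        transTo_trans hYsft h1.1 hA', transTo_trans hYsft hA h1.2⟩
    · -- relative bridge from x' to x
      obtain ⟨xb, hbX, hbl, ⟨n, hn, hbr⟩, hbπ⟩ := hBr' m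
      have hbψ : sliding Ψ (sliding Φ xb) = sliding Ψ (sliding Φ x) := by
        rw [key, key, hbπ]; exact hE.symm
      have h1 : TransEquiv Y (sliding Ψ) (sliding Φ xb) (sliding Φ x) :=
        transEquiv_of_rightAsymp (hφmem xb hbX) (hφmem x hx) hbψ
          (fun i hi => congrArg Φ (hbr i hi))
      exact ⟨xb, hbX, hbl, ⟨n, hn, hbr⟩,
        transTo_trans hYsft h1.1 hA, transTo_trans hYsft hA' h1.2⟩

end SymbDyn
end

section
/- Let X and Y be irreducible 1-step shifts of finite type over finite alphabets, Z a shift space, and φ : X → Y, ψ : Y → Z 1-block factor codes, with π = ψ ∘ φ. Then any two points in a single π-transition class are sent by φ into the same ψ-transition class: for all x, x' ∈ X, if x ∼_π x' then φ(x) ∼_ψ φ(x'). -/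
/- Common definitions: shift spaces over finite alphabets, 1-block factor codes,
   transition classes, class degrees, relative transition classes, relative class
   degrees, routability and depth. -/

open Set

namespace SymbDyn

theorem pi_equiv_implies_psi_equiv
    {A B C : Type*} [Fintype A] [Fintype B] [Fintype C]
    [TopologicalSpace A] [DiscreteTopology A]
    [TopologicalSpace B] [DiscreteTopology B]
    [TopologicalSpace C] [DiscreteTopology C]
    (X : Set (ℤ → A)) (Y : Set (ℤ → B)) (Z : Set (ℤ → C))
    (hX : IsShiftSpace X) (hXirr : IsIrreducibleShift X) (hXsft : IsOneStepSFT X)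
    (hY : IsShiftSpace Y) (hYirr : IsIrreducibleShift Y) (hYsft : IsOneStepSFT Y)
    (hZ : IsShiftSpace Z)
    (Φ : A → B) (Ψ : B → C)
    (hφ : sliding Φ '' X = Y) (hψ : sliding Ψ '' Y = Z)
    (x x' : ℤ → A) (hx : x ∈ X) (hx' : x' ∈ X)
    (h : TransEquiv X (sliding (Ψ ∘ Φ)) x x') :
    TransEquiv Y (sliding Ψ) (sliding Φ x) (sliding Φ x') := by
  have key : ∀ u u' : ℤ → A, u ∈ X → u' ∈ X →
      TransTo X (sliding (Ψ ∘ Φ)) u u' →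
      TransTo Y (sliding Ψ) (sliding Φ u) (sliding Φ u') := by
    intro u u' hu hu' ⟨heq, hbr⟩
    constructor
    · funext i
      have := congrFun heq i
      exact this
    · intro m
      obtain ⟨xb, hxbX, hle, ⟨n, hn, hge⟩, hπ⟩ := hbr m
      refine ⟨sliding Φ xb, ?_, ?_, ⟨n, hn, ?_⟩, ?_⟩
      · rw [← hφ]; exact ⟨xb, hxbX, rfl⟩
      · intro i hi; simp [sliding, hle i hi]
      · intro i hi; simp [sliding, hge i hi]
      · funext i
        exact congrFun hπ i
  exact ⟨key x x' hx hx' h.1, key x' x hx' hx h.2⟩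

end SymbDyn
end

section
/- Let X and Y be irreducible 1-step shifts of finite type over finite alphabets, Z a shift space, and φ : X → Y, ψ : Y → Z 1-block factor codes, with π = ψ ∘ φ. Let y ∈ Y, let l ≥ 1, and suppose the block w = y_{[1,l]} is φ/ψ-presented through M ⊆ 𝒜_X at n. Let x, x' ∈ X satisfy φ(x) ∼_ψ y and φ(x') ∼_ψ y, and suppose there is a ∈ M such that both x_{[1,l]} and x'_{[1,l]} are φ/ψ-routable through a at n. Then there exist both a (φ/ψ,0)-bridge from x to x' and a (φ/ψ,0)-bridge from x' to x. -/
/- Common definitions: shift spaces over finite alphabets, 1-block factor codes,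
   transition classes, class degrees, relative transition classes, relative class
   degrees, routability and depth. -/

open Set

namespace SymbDyn

variable {A B C : Type*}

lemma mem_translate' {X : Set (ℤ → A)} (hX : shift A '' X = X) (k : ℤ) {x : ℤ → A}
    (hx : x ∈ X) : (fun i => x (i + k)) ∈ X := by
  induction k using Int.induction_on with
  | zero => simpa using hx
  | succ k ih =>
    have h2 : shift A (fun i => x (i + (k:ℤ))) ∈ shift A '' X := ⟨_, ih, rfl⟩
    rw [hX] at h2
    have e : (fun i => x (i + (k+1:ℤ))) = shift A (fun i => x (i + (k:ℤ))) := by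
      funext i; show x (i + (k+1)) = x (i + 1 + k); ring_nf
    rw [e]; exact h2
  | pred k ih =>
    rw [← hX] at ih
    obtain ⟨w, hw, hsw⟩ := ih
    have hwe : ∀ j : ℤ, w j = x (j + (-(k:ℤ) - 1)) := by
      intro j
      have h3 := congrFun hsw (j - 1)
      simp only [shift] at h3
      rw [show j - 1 + 1 = j by ring] at h3
      rw [h3]; ring_nf
    have h4 : w = fun i => x (i + (-(k:ℤ) - 1)) := funext hwe
    rw [h4] at hw
    convert hw using 2 with i
    try ring_nf

lemma pair_occurs' {X : Set (ℤ → A)} {x : ℤ → A} (hx : x ∈ X) (i : ℤ) :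
    BlockOccursIn X [x i, x (i + 1)] := by
  refine ⟨x, hx, i, fun j hj => ?_⟩
  simp only [List.length_cons, List.length_nil] at hj
  match j, hj with
  | 0, _ => simp
  | 1, _ => simp

/-- Splice two points at coordinate `n`. -/
def splice (x y : ℤ → A) (n : ℤ) : ℤ → A := fun i => if i ≤ n then x i else y i

lemma splice_left {x y : ℤ → A} {n i : ℤ} (h : i ≤ n) : splice x y n i = x i := if_pos h

lemma splice_right {x y : ℤ → A} {n i : ℤ} (h : x n = y n) (hi : n ≤ i) :
    splice x y n i = y i := by
  unfold splice; split_ifs with h'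
  · have e : i = n := le_antisymm h' hi; rw [e]; exact h
  · rfl

lemma splice_mem {X : Set (ℤ → A)} (hX : IsOneStepSFT X) {x y : ℤ → A}
    (hx : x ∈ X) (hy : y ∈ X) {n : ℤ} (h : x n = y n) : splice x y n ∈ X := by
  apply hX; intro i
  rcases le_or_gt (i + 1) n with hi | hi
  · rw [splice_left (by omega), splice_left hi]; exact pair_occurs' hx i
  · rw [splice_right h (by omega), splice_right h (by omega)]; exact pair_occurs' hy i

lemma transTo_trans_s6 {Y : Set (ℤ → B)} (hYsft : IsOneStepSFT Y) {Ψ : B → C}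
    {p q r : ℤ → B} (h1 : TransTo Y (sliding Ψ) p q) (h2 : TransTo Y (sliding Ψ) q r) :
    TransTo Y (sliding Ψ) p r := by
  refine ⟨h1.1.trans h2.1, fun m => ?_⟩
  obtain ⟨b1, hb1Y, hb1l, ⟨n1, hn1, hb1r⟩, hb1p⟩ := h1.2 m
  obtain ⟨b2, hb2Y, hb2l, ⟨n2, hn2, hb2r⟩, hb2p⟩ := h2.2 n1
  have hag : b1 n1 = b2 n1 := by rw [hb1r n1 le_rfl, hb2l n1 le_rfl]
  refine ⟨splice b1 b2 n1, splice_mem hYsft hb1Y hb2Y hag, fun i hi => ?_,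
    ⟨n2, by omega, fun i hi => ?_⟩, ?_⟩
  · rw [splice_left (by omega)]; exact hb1l i hi
  · rw [splice_right hag (by omega)]; exact hb2r i hi
  · funext i
    rcases le_or_gt i n1 with hi | hi
    · show Ψ (splice b1 b2 n1 i) = _
      rw [splice_left hi]; exact congrFun hb1p i
    · show Ψ (splice b1 b2 n1 i) = _
      rw [splice_right hag (by omega)]
      have := congrFun hb2p i
      rw [show (sliding Ψ b2) i = Ψ (b2 i) from rfl] at this
      rw [this, ← h1.1]

lemma transEquiv_trans {Y : Set (ℤ → B)} (hYsft : IsOneStepSFT Y) {Ψ : B → C}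
    {p q r : ℤ → B} (h1 : TransEquiv Y (sliding Ψ) p q) (h2 : TransEquiv Y (sliding Ψ) q r) :
    TransEquiv Y (sliding Ψ) p r :=
  ⟨transTo_trans_s6 hYsft h1.1 h2.1, transTo_trans_s6 hYsft h2.2 h1.2⟩

lemma seg_eq (x : ℤ → A) (s : ℤ) (l : ℕ) :
    segment x s l = (List.range l).map (fun j : ℕ => x (s + (j:ℤ))) := by
  unfold segment
  have key : ∀ L : List ℕ, (L.flatMap fun a => ([Int.ofNat a] : List ℤ)) = L.map Int.ofNat := by
    intro L; induction L with
    | nil => rfl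
    | cons h t ih => rw [List.flatMap_cons, List.map_cons, ih]; rfl
  show List.map (fun i => x (s + i)) ((List.range l).flatMap fun a => ([Int.ofNat a] : List ℤ)) = _
  rw [key, List.map_map]
  rfl

lemma segment_get? (x : ℤ → A) (s : ℤ) (l : ℕ) (j : ℕ) (hj : j < l) :
    (segment x s l)[j]? = some (x (s + j)) := by
  rw [seg_eq, List.getElem?_map, List.getElem?_range hj]
  rfl

lemma segment_length (x : ℤ → A) (s : ℤ) (l : ℕ) : (segment x s l).length = l := by
  rw [seg_eq, List.length_map, List.length_range]

lemma routable_extract {X : Set (ℤ → A)} (hX : shift A '' X = X) {Φ : A → B} {Ψ : B → C}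
    {y : ℤ → B} {x : ℤ → A} {l n : ℕ} (hl : 1 ≤ l) (hn : 1 ≤ n) (hnl : n ≤ l) {a : A}
    (hr : RelRoutable X Φ Ψ (segment y 1 l) n a (segment x 1 l)) :
    ∃ f : ℤ → A, f ∈ X ∧ f 1 = x 1 ∧ f l = x l ∧ f n = a ∧
      ∀ i : ℤ, 1 ≤ i → i ≤ l → Ψ (Φ (f i)) = Ψ (y i) := by
  obtain ⟨v, ⟨p, hp, s, hocc⟩, hvlen, hvmap, hv0, hvl, hvn⟩ := hr
  rw [segment_length] at hvlen
  rw [hvlen, segment_length] at hvl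
  set f : ℤ → A := fun i => p (i + (s - 1)) with hf
  have hfX : f ∈ X := mem_translate' hX (s - 1) hp
  have hget : ∀ j : ℕ, j < l → v[j]? = some (f (1 + j)) := by
    intro j hj
    rw [hocc j (by rw [hvlen]; exact hj)]
    congr 1
    show p (s + j) = p (1 + (j:ℤ) + (s - 1))
    ring_nf
  refine ⟨f, hfX, ?_, ?_, ?_, ?_⟩
  · have e1 := hget 0 (by omega)
    rw [hv0, segment_get? x 1 l 0 (by omega)] at e1
    have : f (1 + (0:ℕ)) = x (1 + (0:ℕ)) := Option.some_injective _ e1.symm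
    simpa using this
  · have e1 := hget (l - 1) (by omega)
    rw [hvl, segment_get? x 1 l (l-1) (by omega)] at e1
    have e2 : f (1 + ((l:ℕ) - 1 : ℕ)) = x (1 + ((l:ℕ) - 1 : ℕ)) := Option.some_injective _ e1.symm
    have e3 : (1 : ℤ) + ((l:ℕ) - 1 : ℕ) = (l : ℤ) := by
      have : ((l - 1 : ℕ) : ℤ) = (l : ℤ) - 1 := by
        rw [Nat.cast_sub hl]; rfl
      omega
    rwa [e3] at e2
  · have e1 := hget (n - 1) (by omega)
    rw [hvn] at e1
    have e2 : f (1 + ((n:ℕ) - 1 : ℕ)) = a := Option.some_injective _ e1.symm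
    have e3 : (1 : ℤ) + ((n:ℕ) - 1 : ℕ) = (n : ℤ) := by
      have : ((n - 1 : ℕ) : ℤ) = (n : ℤ) - 1 := by
        rw [Nat.cast_sub hn]; rfl
      omega
    rwa [e3] at e2
  · intro i hi1 hil
    set j : ℕ := (i - 1).toNat with hj
    have hjl : j < l := by omega
    have hij : (i : ℤ) = 1 + (j : ℤ) := by omega
    have e2 : (v.map (Ψ ∘ Φ))[j]? = ((segment y 1 l).map Ψ)[j]? := by rw [hvmap]
    rw [List.getElem?_map, List.getElem?_map, hget j hjl, segment_get? y 1 l j hjl] at e2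
    simp only [Option.map_some] at e2
    have e3 : (Ψ ∘ Φ) (f (1 + j)) = Ψ (y (1 + j)) := Option.some_injective _ e2
    rw [hij]
    exact e3

lemma bridge_aux {A B C : Type*} {X : Set (ℤ → A)} {Y : Set (ℤ → B)}
    (hXshift : shift A '' X = X) (hXsft : IsOneStepSFT X) (hYsft : IsOneStepSFT Y)
    {Φ : A → B} {Ψ : B → C} (hφ : sliding Φ '' X = Y)
    {y : ℤ → B} {l n : ℕ} (hl : 1 ≤ l) (hn : 1 ≤ n) (hnl : n ≤ l)
    {x x' : ℤ → A} (hx : x ∈ X) (hx' : x' ∈ X)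
    (hxy : TransEquiv Y (sliding Ψ) (sliding Φ x) y)
    (hx'y : TransEquiv Y (sliding Ψ) (sliding Φ x') y)
    {a : A}
    (hrx : RelRoutable X Φ Ψ (segment y 1 l) n a (segment x 1 l))
    (hrx' : RelRoutable X Φ Ψ (segment y 1 l) n a (segment x' 1 l)) :
    ∃ xb, IsRelBridge X Y (sliding Φ) (sliding Ψ) 0 x x' xb := by
  obtain ⟨f, hfX, hf1, hfl, hfn, hfψ⟩ := routable_extract hXshift hl hn hnl hrx
  obtain ⟨g, hgX, hg1, hgl, hgn, hgψ⟩ := routable_extract hXshift hl hn hnl hrx'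
  set N : ℤ := (n : ℤ) with hN
  set L : ℤ := (l : ℤ) with hL
  have hN1 : 1 ≤ N := by rw [hN]; exact_mod_cast hn
  have hNL : N ≤ L := by rw [hN, hL]; exact_mod_cast hnl
  have hL1 : 1 ≤ L := le_trans hN1 hNL
  set xb : ℤ → A := fun i =>
    if i ≤ 0 then x i else if i ≤ N then f i else if i ≤ L then g i else x' i with hxb
  have h1 : ∀ i : ℤ, i ≤ 0 → xb i = x i := fun i hi => if_pos hi
  have h2 : ∀ i : ℤ, 1 ≤ i → i ≤ N → xb i = f i := by
    intro i hi1 hiN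
    show (if i ≤ 0 then x i else if i ≤ N then f i else if i ≤ L then g i else x' i) = f i
    rw [if_neg (by omega), if_pos hiN]
  have h3 : ∀ i : ℤ, N ≤ i → i ≤ L → xb i = g i := by
    intro i hNi hiL
    rcases le_or_gt i N with hiN | hiN
    · have e : i = N := le_antisymm hiN hNi
      rw [e, h2 N hN1 le_rfl, hfn, hgn]
    · show (if i ≤ 0 then x i else if i ≤ N then f i else if i ≤ L then g i else x' i) = g i
      rw [if_neg (by omega), if_neg (by omega), if_pos hiL]
  have h4 : ∀ i : ℤ, L ≤ i → xb i = x' i := by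
    intro i hLi
    rcases le_or_gt i L with hiL | hiL
    · have e : i = L := le_antisymm hiL hLi
      rw [e, h3 L hNL le_rfl]
      exact hgl
    · show (if i ≤ 0 then x i else if i ≤ N then f i else if i ≤ L then g i else x' i) = x' i
      rw [if_neg (by omega), if_neg (by omega), if_neg (by omega)]
  have hxbX : xb ∈ X := by
    apply hXsft
    intro i
    rcases lt_trichotomy i 0 with hi | hi | hi
    · rw [h1 i (by omega), h1 (i + 1) (by omega)]
      exact pair_occurs' hx i
    · subst hi
      have ea : xb (0 : ℤ) = x 0 := h1 0 le_rfl
      have eb : xb ((0 : ℤ) + 1) = x ((0 : ℤ) + 1) := by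
        rw [h2 ((0 : ℤ) + 1) (by omega) (by omega)]
        rw [show (0 : ℤ) + 1 = 1 by norm_num]
        exact hf1
      rw [ea, eb]
      exact pair_occurs' hx 0
    · rcases le_or_gt (i + 1) N with hiN | hiN
      · rw [h2 i (by omega) (by omega), h2 (i + 1) (by omega) hiN]
        exact pair_occurs' hfX i
      · rcases le_or_gt (i + 1) L with hiL | hiL
        · rw [h3 i (by omega) (by omega), h3 (i + 1) (by omega) hiL]
          exact pair_occurs' hgX i
        · rw [h4 i (by omega), h4 (i + 1) (by omega)]
          exact pair_occurs' hx' i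
  have hφxbY : sliding Φ xb ∈ Y := hφ ▸ ⟨xb, hxbX, rfl⟩
  have hψx : sliding Ψ (sliding Φ x) = sliding Ψ y := hxy.1.1
  have hψx' : sliding Ψ (sliding Φ x') = sliding Ψ y := hx'y.1.1
  have hψxb : sliding Ψ (sliding Φ xb) = sliding Ψ y := by
    funext i
    show Ψ (Φ (xb i)) = Ψ (y i)
    rcases le_or_gt i 0 with hi | hi
    · rw [h1 i hi]; exact congrFun hψx i
    · rcases le_or_gt i N with hiN | hiN
      · rw [h2 i hi hiN]; exact hfψ i hi (by omega)
      · rcases le_or_gt i L with hiL | hiL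
        · rw [h3 i (by omega) hiL]; exact hgψ i (by omega) hiL
        · rw [h4 i (by omega)]; exact congrFun hψx' i
  have fwd : TransTo Y (sliding Ψ) (sliding Φ xb) y := by
    refine ⟨hψxb, fun m => ?_⟩
    obtain ⟨b, hbY, hbl, ⟨n2, hn2, hbr⟩, hbψ⟩ := hx'y.1.2 (max m L + 1)
    have hag : (sliding Φ xb) (max m L + 1) = b (max m L + 1) := by
      rw [hbl _ le_rfl]
      show Φ (xb (max m L + 1)) = Φ (x' (max m L + 1))
      rw [h4 _ (by omega)]
    refine ⟨splice (sliding Φ xb) b (max m L + 1),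
      splice_mem hYsft hφxbY hbY hag, fun i hi => splice_left (by omega),
      ⟨n2, by omega, fun i hi => ?_⟩, ?_⟩
    · rw [splice_right hag (by omega)]
      exact hbr i hi
    · funext i
      rcases le_or_gt i (max m L + 1) with hi | hi
      · show Ψ (splice (sliding Φ xb) b (max m L + 1) i) = _
        rw [splice_left hi]; rfl
      · show Ψ (splice (sliding Φ xb) b (max m L + 1) i) = _
        rw [splice_right hag (by omega)]
        calc Ψ (b i) = sliding Ψ (sliding Φ x') i := congrFun hbψ i
          _ = sliding Ψ y i := congrFun hψx' i
          _ = sliding Ψ (sliding Φ xb) i := (congrFun hψxb i).symm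
  have bwd : TransTo Y (sliding Ψ) y (sliding Φ xb) := by
    refine ⟨hψxb.symm, fun m => ?_⟩
    obtain ⟨b, hbY, hbl, ⟨n2, hn2, hbr⟩, hbψ⟩ := hx'y.2.2 (max m L + 1)
    refine ⟨b, hbY, fun i hi => hbl i (by omega), ⟨n2, by omega, fun i hi => ?_⟩, hbψ⟩
    rw [hbr i hi]
    show Φ (x' i) = Φ (xb i)
    rw [h4 i (by omega)]
  have heq : TransEquiv Y (sliding Ψ) (sliding Φ xb) (sliding Φ x) :=
    transEquiv_trans hYsft ⟨fwd, bwd⟩ ⟨hxy.2, hxy.1⟩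
  exact ⟨xb, hxbX, fun i hi => h1 i hi, ⟨L + 1, by omega, fun i hi => h4 i (by omega)⟩, heq⟩

end SymbDyn

namespace SymbDyn

theorem two_way_bridge_of_routable
    {A B C : Type*} [Fintype A] [Fintype B] [Fintype C]
    [TopologicalSpace A] [DiscreteTopology A]
    [TopologicalSpace B] [DiscreteTopology B]
    [TopologicalSpace C] [DiscreteTopology C]
    (X : Set (ℤ → A)) (Y : Set (ℤ → B)) (Z : Set (ℤ → C))
    (hX : IsShiftSpace X) (hXirr : IsIrreducibleShift X) (hXsft : IsOneStepSFT X)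
    (hY : IsShiftSpace Y) (hYirr : IsIrreducibleShift Y) (hYsft : IsOneStepSFT Y)
    (hZ : IsShiftSpace Z)
    (Φ : A → B) (Ψ : B → C)
    (hφ : sliding Φ '' X = Y) (hψ : sliding Ψ '' Y = Z)
    (y : ℤ → B) (hy : y ∈ Y) (l : ℕ) (hl : 1 ≤ l) (n : ℕ) (hn : 1 ≤ n) (hnl : n ≤ l)
    (M : Set A) (hpres : RelPresented X Φ Ψ (segment y 1 l) n M)
    (x x' : ℤ → A) (hx : x ∈ X) (hx' : x' ∈ X)
    (hxy : TransEquiv Y (sliding Ψ) (sliding Φ x) y)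
    (hx'y : TransEquiv Y (sliding Ψ) (sliding Φ x') y)
    (a : A) (ha : a ∈ M)
    (hrx : RelRoutable X Φ Ψ (segment y 1 l) n a (segment x 1 l))
    (hrx' : RelRoutable X Φ Ψ (segment y 1 l) n a (segment x' 1 l)) :
    (∃ xb, IsRelBridge X Y (sliding Φ) (sliding Ψ) 0 x x' xb) ∧
      (∃ xb, IsRelBridge X Y (sliding Φ) (sliding Ψ) 0 x' x xb) :=
  ⟨bridge_aux hX.2.2 hXsft hYsft hφ hl hn hnl hx hx' hxy hx'y hrx hrx',
   bridge_aux hX.2.2 hXsft hYsft hφ hl hn hnl hx' hx hx'y hxy hrx' hrx⟩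

end SymbDyn
end

section
/- Let X = {0,1}^ℤ be the full 2-shift, let φ : X → X be the factor code given by φ(x)_i = x_i + x_{i+1} (mod 2), let Z = {z₀} ⊆ {0}^ℤ where z₀ is the constant-0 point, let ψ : X → Z be the constant (trivial) factor code, and let π = ψ ∘ φ. Then d_π = 1 while d_φ = 2 and d_ψ = 1; in particular d_π < d_φ · d_ψ, so the multiplicative equality for class degrees fails for the composition of infinite-to-one factor codes. -/
/- Common definitions: shift spaces over finite alphabets, 1-block factor codes,
   transition classes, class degrees, relative transition classes, relative class
   degrees, routability and depth. -/

open Set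

namespace SymbDyn

private lemma z2_aac : ∀ a b c d : ZMod 2, a + b = c + d → b + d = a + c := by decide
private lemma z2_self : ∀ a : ZMod 2, a + a = 0 := by decide
private lemma z2_eq_of_add_zero : ∀ a b : ZMod 2, a + b = 0 → a = b := by decide
private lemma z2_ne : ∀ a b : ZMod 2, a ≠ b → a + b = 1 := by decide
private lemma z2_eq_add_one : ∀ a b : ZMod 2, a + b = 1 → a = b + 1 := by decide
private lemma z2_succ_add : ∀ a b : ZMod 2, (a + 1) + (b + 1) = a + b := by decide
private lemma z2_ne_succ : ∀ a : ZMod 2, a ≠ a + 1 := by decide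

private lemma diff_const {x x' : ℤ → ZMod 2}
    (h : ∀ i : ℤ, x i + x (i + 1) = x' i + x' (i + 1)) :
    ∀ i : ℤ, x i + x' i = x 0 + x' 0 := by
  have step : ∀ i : ℤ, x (i + 1) + x' (i + 1) = x i + x' i :=
    fun i => z2_aac _ _ _ _ (h i)
  intro i
  induction i using Int.induction_on with
  | zero => rfl
  | succ k ih => rw [step k, ih]
  | pred k ih =>
      have s := step (-(k + 1))
      have e : (-((k : ℤ) + 1) + 1) = -k := by ring
      rw [e] at s
      have e2 : -(k : ℤ) - 1 = -((k : ℤ) + 1) := by ring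
      rw [e2, ← s, ih]

private lemma transEquiv_refl (π : (ℤ → ZMod 2) → ℤ → ZMod 2) (x : ℤ → ZMod 2) :
    TransEquiv univ π x x := by
  have h : TransTo univ π x x :=
    ⟨rfl, fun m => ⟨x, trivial, fun _ _ => rfl, ⟨m + 1, by omega, fun _ _ => rfl⟩, rfl⟩⟩
  exact ⟨h, h⟩

private lemma const_transClass (π : (ℤ → ZMod 2) → ℤ → ZMod 2) (z₀ : ℤ → ZMod 2)
    (hc : ∀ x, π x = z₀) (x : ℤ → ZMod 2) : transClass univ π x = univ := by
  have key : ∀ a b : ℤ → ZMod 2, TransTo univ π a b := by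
    intro a b
    refine ⟨(hc a).trans (hc b).symm, fun m => ?_⟩
    exact ⟨fun i => if i ≤ m then a i else b i, trivial, fun i hi => if_pos hi,
      ⟨m + 1, by omega, fun i hi => if_neg (by omega)⟩, (hc _).trans (hc a).symm⟩
  ext x'
  simp only [transClass, mem_setOf_eq, mem_univ, true_and, iff_true]
  exact ⟨key x x', key x' x⟩

private lemma constCode_classDeg (π : (ℤ → ZMod 2) → ℤ → ZMod 2) (z₀ : ℤ → ZMod 2)
    (hc : ∀ x, π x = z₀) : classDeg univ {z₀} π = 1 := by
  have hset : {S : Set (ℤ → ZMod 2) |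
      ∃ x ∈ (univ : Set (ℤ → ZMod 2)), π x = z₀ ∧ S = transClass univ π x} = {univ} := by
    ext S
    simp only [mem_setOf_eq, mem_singleton_iff, mem_univ, true_and]
    constructor
    · rintro ⟨x, hx, rfl⟩
      exact const_transClass π z₀ hc x
    · rintro rfl
      exact ⟨fun _ => 0, hc _, (const_transClass π z₀ hc _).symm⟩
  have hpt : ptDeg (univ : Set (ℤ → ZMod 2)) π z₀ = 1 := by
    rw [ptDeg, hset, Set.encard_singleton]
  rw [classDeg]
  simp [hpt]

private def psum (y : ℤ → ZMod 2) : ℕ → ZMod 2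
  | 0 => 0
  | k + 1 => psum y k + y k

private def qsum (y : ℤ → ZMod 2) : ℕ → ZMod 2
  | 0 => 0
  | k + 1 => qsum y k + y (-(k + 1))

private def base (y : ℤ → ZMod 2) (n : ℤ) : ZMod 2 :=
  if 0 ≤ n then psum y n.toNat else qsum y (-n).toNat

private lemma base_spec (y : ℤ → ZMod 2) (n : ℤ) : base y n + base y (n + 1) = y n := by
  rcases le_or_gt 0 n with hn | hn
  · have h1 : base y n = psum y n.toNat := if_pos hn
    have h2 : base y (n + 1) = psum y (n.toNat + 1) := by
      rw [base, if_pos (by omega)]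
      congr 1
      omega
    have h3 : ((n.toNat : ℤ)) = n := Int.toNat_of_nonneg hn
    rw [h1, h2, psum, h3, ← add_assoc, z2_self, zero_add]
  · by_cases h1 : 0 ≤ n + 1
    · have hn1 : n = -1 := by omega
      subst hn1
      have e1 : base y (-1) = qsum y 1 := by rw [base, if_neg (by omega)]; norm_num
      have e2 : base y (-1 + 1) = psum y 0 := by norm_num [base]
      rw [e1, e2]
      show qsum y 0 + y (-(0 + 1)) + psum y 0 = y (-1)
      rw [qsum, psum]
      norm_num
    · set m := (-(n + 1)).toNat with hm
      have hmn : ((m : ℤ)) = -(n + 1) := Int.toNat_of_nonneg (by omega)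
      have e1 : base y n = qsum y (m + 1) := by
        rw [base, if_neg (by omega)]
        congr 1
        omega
      have e2 : base y (n + 1) = qsum y m := by rw [base, if_neg (by omega)]
      have e3 : (-((m : ℤ) + 1)) = n := by omega
      rw [e1, e2, qsum, e3]
      rw [add_comm (qsum y m) (y n), add_assoc, z2_self, add_zero]

private lemma phi_base (y : ℤ → ZMod 2) :
    (fun (x : ℤ → ZMod 2) i => x i + x (i + 1)) (base y) = y :=
  funext (base_spec y)

private lemma not_transTo_compl (x : ℤ → ZMod 2) :
    ¬ TransTo univ (fun (x : ℤ → ZMod 2) i => x i + x (i + 1)) x (fun i => x i + 1) := by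
  rintro ⟨-, hb⟩
  obtain ⟨xb, -, hle, ⟨n, hn, hge⟩, hπ⟩ := hb 0
  have h : ∀ i : ℤ, xb i + xb (i + 1) = x i + x (i + 1) := fun i => congrFun hπ i
  have hd := diff_const h
  have h0 : xb 0 = x 0 := hle 0 le_rfl
  have hz : xb n + x n = 0 := by rw [hd n, h0, z2_self]
  have hxb : xb n = x n := z2_eq_of_add_zero _ _ hz
  have hgn : xb n = x n + 1 := hge n le_rfl
  rw [hxb] at hgn
  exact z2_ne_succ _ hgn

private lemma fiber (y x : ℤ → ZMod 2)
    (h : (fun (x : ℤ → ZMod 2) i => x i + x (i + 1)) x = y) :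
    x = base y ∨ x = fun i => base y i + 1 := by
  have h' : ∀ i : ℤ, x i + x (i + 1) = base y i + base y (i + 1) :=
    fun i => (congrFun h i).trans (base_spec y i).symm
  have hd := diff_const h'
  by_cases h0 : x 0 = base y 0
  · left
    funext i
    exact z2_eq_of_add_zero _ _ (by rw [hd i, h0, z2_self])
  · right
    funext i
    exact z2_eq_add_one _ _ (by rw [hd i, z2_ne _ _ h0])

private lemma ptDeg_phi (y : ℤ → ZMod 2) :
    ptDeg (univ : Set (ℤ → ZMod 2)) (fun x i => x i + x (i + 1)) y = 2 := by
  set φ := fun (x : ℤ → ZMod 2) i => x i + x (i + 1) with hφ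
  have hset : {S : Set (ℤ → ZMod 2) |
      ∃ x ∈ (univ : Set (ℤ → ZMod 2)), φ x = y ∧ S = transClass univ φ x}
      = {transClass univ φ (base y), transClass univ φ (fun i => base y i + 1)} := by
    ext S
    simp only [mem_setOf_eq, mem_insert_iff, mem_singleton_iff, mem_univ, true_and]
    constructor
    · rintro ⟨x, hx, rfl⟩
      rcases fiber y x hx with h | h
      · left; rw [h]
      · right; rw [h]
    · rintro (rfl | rfl)
      · exact ⟨base y, phi_base y, rfl⟩
      · refine ⟨_, ?_, rfl⟩
        funext i
        show (base y i + 1) + (base y (i + 1) + 1) = y i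
        rw [z2_succ_add]
        exact base_spec y i
  have hne : transClass univ φ (base y) ≠ transClass univ φ (fun i => base y i + 1) := by
    intro he
    have hmem : base y ∈ transClass univ φ (base y) := ⟨trivial, transEquiv_refl φ (base y)⟩
    rw [he] at hmem
    exact not_transTo_compl (base y) hmem.2.2
  rw [ptDeg, hset, Set.encard_pair hne]

private lemma classDeg_phi :
    classDeg (univ : Set (ℤ → ZMod 2)) univ (fun x i => x i + x (i + 1)) = 2 := by
  rw [classDeg]
  simp [ptDeg_phi]


theorem multiplicative_equality_fails :
    let X : Set (ℤ → ZMod 2) := Set.univ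
    let φ : (ℤ → ZMod 2) → ℤ → ZMod 2 := fun x i => x i + x (i + 1)
    let z₀ : ℤ → ZMod 2 := fun _ => 0
    let Z : Set (ℤ → ZMod 2) := {z₀}
    let ψ : (ℤ → ZMod 2) → ℤ → ZMod 2 := fun _ => z₀
    classDeg X Z (fun x => ψ (φ x)) = 1 ∧
      classDeg X X φ = 2 ∧ classDeg X Z ψ = 1 ∧
      classDeg X Z (fun x => ψ (φ x)) < classDeg X X φ * classDeg X Z ψ := by
  intro X φ z₀ Z ψ
  have h1 : classDeg X Z (fun x => ψ (φ x)) = 1 := constCode_classDeg _ _ (fun _ => rfl)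
  have h2 : classDeg X X φ = 2 := classDeg_phi
  have h3 : classDeg X Z ψ = 1 := constCode_classDeg _ _ (fun _ => rfl)
  refine ⟨h1, h2, h3, ?_⟩
  simp only [h1, h2, h3]
  norm_num


end SymbDyn
end
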